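/- Let m ≥ 1, let σ be a permutation of {1,…,m} with covering table (k_1,…,k_m), and define the index sequence α = (α_1,…,α_m) by α_j = k_{m+1−j} (so 0 ≤ α_j ≤ j−1). Then for every cycle of σ with element set C ⊆ {1,…,m} and largest element s*, the set {m+1−s : s ∈ C} is exactly the component of the position m+1−s* in α; this gives a bijection between the cycles of σ (fixed points counted as cycles) and the components of α. In particular, the number of positions j with α_j = 0 equals the number of cycles of σ. -/

import Mathlib

open scoped Classical

/-- The standard representation of a permutation `σ` of `{1,…,m}` (elements encoded as
`Fin m`, with `x : Fin m` standing for the value `x+1`): each cycle is written with its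
largest element first followed by its successive images, and the cycles are listed in
increasing order of their largest elements. -/
noncomputable def stdRep {m : ℕ} (σ : Equiv.Perm (Fin m)) : List (Fin m) :=
  ((List.finRange m).filter fun c => decide (∀ y : Fin m, σ.SameCycle c y → y ≤ c)).flatMap
    fun c =>
      (List.range (Finset.univ.filter fun y : Fin m => σ.SameCycle c y).card).map
        fun k => (σ ^ k) c

/-- The covering table `K(σ) = (k_1,…,k_m)`: for the element `i = x+1` (with
`x : Fin m`), `k_i = m+1−t` where `t` is the rightmost element greater than `i`
occurring to the left of `i` in the standard representation, and `k_i = 0` otherwise. -/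
noncomputable def covTable {m : ℕ} (σ : Equiv.Perm (Fin m)) (x : Fin m) : ℕ :=
  match (((stdRep σ).takeWhile fun t => decide (t ≠ x)).filter
      fun t => decide (x < t)).getLast? with
  | none => 0
  | some t => m - t.val

/-- The index sequence `α = (α_1,…,α_m)` with `α_j = k_{m+1−j}`, encoded as a
function on positions `j ∈ ℕ` (equal to `0` outside `{1,…,m}`); the element of value
`m+1−j` is `⟨m−j, _⟩ : Fin m`. -/
noncomputable def alphaOf {m : ℕ} (σ : Equiv.Perm (Fin m)) : ℕ → ℕ :=
  fun j => if h : 1 ≤ j ∧ j ≤ m then covTable σ ⟨m - j, by omega⟩ else 0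

/-- The component of a position `h` in the index sequence `α`: the set of positions
`j ∈ {1,…,m}` from which the iteration `j ↦ α_j` eventually reaches `h`. -/
noncomputable def componentOf (m : ℕ) (α : ℕ → ℕ) (h : ℕ) : Finset ℕ :=
  (Finset.Icc 1 m).filter fun j => ∃ k : ℕ, α^[k] j = h

/-- The number of orbits of `σ` (fixed points counted as orbits): the number of
distinct `SameCycle`-classes. -/
noncomputable def numOrbits {m : ℕ} (σ : Equiv.Perm (Fin m)) : ℕ :=
  (Finset.univ.image fun x : Fin m =>
    Finset.univ.filter fun y : Fin m => σ.SameCycle x y).card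

/-! ### Auxiliary machinery -/

namespace CyclesComp

/-- take-while over an append where the whole first part satisfies the predicate. -/
lemma takeWhile_append_all {α : Type*} {p : α → Bool} {A B : List α}
    (h : ∀ a ∈ A, p a = true) : (A ++ B).takeWhile p = A ++ B.takeWhile p := by
  have h2 : A.takeWhile p = A := List.takeWhile_eq_self_iff.2 h
  rw [List.takeWhile_append, h2, if_pos rfl]

/-- take-while over an append that stops inside the first part. -/
lemma takeWhile_append_stop {α : Type*} {p : α → Bool} {A B : List α} {a : α}
    (ha : a ∈ A) (hpa : p a = false) : (A ++ B).takeWhile p = A.takeWhile p := by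
  rw [List.takeWhile_append, if_neg]
  intro hlen
  have heq : A.takeWhile p = A := (List.takeWhile_prefix p).eq_of_length hlen
  have := List.mem_takeWhile_imp (heq ▸ ha)
  simp_all

variable {m : ℕ} (σ : Equiv.Perm (Fin m))

/-- The `SameCycle` class of `x` as a finset. -/
noncomputable def cls (x : Fin m) : Finset (Fin m) :=
  Finset.univ.filter fun y : Fin m => σ.SameCycle x y

lemma mem_cls {x y : Fin m} : y ∈ cls σ x ↔ σ.SameCycle x y := by simp [cls]

lemma cls_eq {x y : Fin m} (h : σ.SameCycle x y) : cls σ x = cls σ y := by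
  ext z; simp only [mem_cls]
  exact ⟨fun hz => h.symm.trans hz, fun hz => h.trans hz⟩

/-- The block of the cycle of `c` in the standard representation. -/
noncomputable def blockL (c : Fin m) : List (Fin m) :=
  (List.range (cls σ c).card).map fun k => (σ ^ k) c

lemma mem_blockL {c y : Fin m} : y ∈ blockL σ c ↔ σ.SameCycle c y := by
  constructor
  · rintro hy
    simp only [blockL, List.mem_map, List.mem_range] at hy
    obtain ⟨k, -, rfl⟩ := hy
    exact Equiv.Perm.sameCycle_pow_right.2 (Equiv.Perm.SameCycle.refl σ c)
  · intro hy
    set n := (cls σ c).card with hn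
    have hn0 : 0 < n := Finset.card_pos.2 ⟨c, (mem_cls σ).2 (Equiv.Perm.SameCycle.refl σ c)⟩
    have hmaps : ∀ k ∈ Finset.range (n+1), (σ ^ k) c ∈ cls σ c := fun k _ =>
      (mem_cls σ).2 (Equiv.Perm.sameCycle_pow_right.2 (Equiv.Perm.SameCycle.refl σ c))
    have hcard : (cls σ c).card < (Finset.range (n+1)).card := by
      simp [← hn]
    obtain ⟨i, hi, j, hj, hne, heq⟩ :=
      Finset.exists_ne_map_eq_of_card_lt_of_maps_to hcard hmaps
    have key : ∀ i j : ℕ, i < j → j < n + 1 → (σ ^ i) c = (σ ^ j) c →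
        ∃ p, 0 < p ∧ p ≤ n ∧ (σ ^ p) c = c := by
      intro i j hij hjn he
      refine ⟨j - i, by omega, by omega, ?_⟩
      have : (σ ^ i) ((σ ^ (j-i)) c) = (σ ^ i) c := by
        rw [← Equiv.Perm.mul_apply, ← pow_add, show i + (j-i) = j by omega, ← he]
      exact (σ ^ i).injective this
    have hp : ∃ p, 0 < p ∧ p ≤ n ∧ (σ ^ p) c = c := by
      rcases lt_or_gt_of_ne hne with h | h
      · exact key i j h (Finset.mem_range.1 hj) heq
      · exact key j i h (Finset.mem_range.1 hi) heq.symm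
    obtain ⟨p, hp0, hpn, hpfix⟩ := hp
    have hfixpow : ∀ q : ℕ, ((σ ^ p) ^ q) c = c := by
      intro q; induction q with
      | zero => simp
      | succ q ih => rw [pow_succ, Equiv.Perm.mul_apply, hpfix, ih]
    have hmod : ∀ k : ℕ, (σ ^ k) c = (σ ^ (k % p)) c := by
      intro k
      conv_lhs => rw [← Nat.mod_add_div k p]
      rw [pow_add, Equiv.Perm.mul_apply, pow_mul, hfixpow]
    obtain ⟨k, -, rfl⟩ := hy.exists_pow_eq'
    simp only [blockL, List.mem_map, List.mem_range]
    exact ⟨k % p, lt_of_lt_of_le (Nat.mod_lt _ hp0) hpn, (hmod k).symm⟩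

lemma blockL_cons (c : Fin m) :
    ∃ tl, blockL σ c = c :: tl := by
  have hn0 : 0 < (cls σ c).card :=
    Finset.card_pos.2 ⟨c, (mem_cls σ).2 (Equiv.Perm.SameCycle.refl σ c)⟩
  obtain ⟨n', hn'⟩ : ∃ n', (cls σ c).card = n' + 1 :=
    ⟨(cls σ c).card - 1, by omega⟩
  refine ⟨(List.range n').map fun k => (σ ^ (k+1)) c, ?_⟩
  rw [blockL, hn', List.range_succ_eq_map, List.map_cons, List.map_map]
  simp [Function.comp_def]

/-- `x` is a leader iff it is the largest element of its cycle. -/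
def isLeader (c : Fin m) : Prop := ∀ y : Fin m, σ.SameCycle c y → y ≤ c

/-- The leader of `x`'s cycle. -/
noncomputable def ldr (x : Fin m) : Fin m :=
  (cls σ x).max' ⟨x, (mem_cls σ).2 (Equiv.Perm.SameCycle.refl σ x)⟩

lemma sameCycle_ldr (x : Fin m) : σ.SameCycle x (ldr σ x) :=
  (mem_cls σ).1 ((cls σ x).max'_mem _)

lemma le_ldr (x : Fin m) : x ≤ ldr σ x :=
  Finset.le_max' _ _ ((mem_cls σ).2 (Equiv.Perm.SameCycle.refl σ x))

lemma ldr_isLeader (x : Fin m) : isLeader σ (ldr σ x) := by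
  intro y hy
  exact Finset.le_max' _ _ ((mem_cls σ).2 ((sameCycle_ldr σ x).trans hy))

lemma ldr_eq_self_of_isLeader {x : Fin m} (h : isLeader σ x) : ldr σ x = x :=
  le_antisymm (h _ (sameCycle_ldr σ x)) (le_ldr σ x)

lemma ldr_eq_of_sameCycle {x y : Fin m} (h : σ.SameCycle x y) : ldr σ x = ldr σ y := by
  apply le_antisymm
  · exact Finset.le_max' _ _ ((mem_cls σ).2 (h.symm.trans (sameCycle_ldr σ x)))
  · exact Finset.le_max' _ _ ((mem_cls σ).2 (h.trans (sameCycle_ldr σ y)))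

/-- Decomposition of the standard representation around the block of `x`'s cycle. -/
lemma stdRep_decomp (x : Fin m) :
    ∃ (A tl B : List (Fin m)),
      stdRep σ = A ++ (ldr σ x :: tl) ++ B ∧
      (∀ y ∈ A, y < ldr σ x ∧ ¬ σ.SameCycle x y) ∧
      (∀ y ∈ ldr σ x :: tl, σ.SameCycle x y) ∧
      x ∈ ldr σ x :: tl := by
  set c := ldr σ x with hc
  set LL := (List.finRange m).filter
    (fun c => decide (∀ y : Fin m, σ.SameCycle c y → y ≤ c)) with hLL
  have hmemLL : ∀ c' : Fin m, c' ∈ LL ↔ isLeader σ c' := by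
    intro c'
    simp only [hLL, List.mem_filter, List.mem_finRange, true_and, decide_eq_true_iff]
    rfl
  have hcLL : c ∈ LL := (hmemLL c).2 (ldr_isLeader σ x)
  obtain ⟨L₁, L₂, hsplit⟩ := List.append_of_mem hcLL
  have hpw : List.Pairwise (· < ·) LL :=
    List.Pairwise.filter _ (List.pairwise_lt_finRange m)
  rw [hsplit] at hpw
  have hlt : ∀ c' ∈ L₁, c' < c := by
    intro c' hc'
    exact (List.pairwise_append.1 hpw).2.2 c' hc' c (List.mem_cons_self (a := c) (l := L₂))
  obtain ⟨tl, htl⟩ := blockL_cons σ c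
  refine ⟨L₁.flatMap (blockL σ), tl, L₂.flatMap (blockL σ), ?_, ?_, ?_, ?_⟩
  · have : stdRep σ = LL.flatMap (blockL σ) := rfl
    rw [this, hsplit, List.flatMap_append, List.flatMap_cons, htl, List.append_assoc]
  · intro y hy
    obtain ⟨c', hc'1, hc'2⟩ := List.mem_flatMap.1 hy
    have hc'L : isLeader σ c' := (hmemLL c').1 (by rw [hsplit]; exact List.mem_append_left _ hc'1)
    have hsc : σ.SameCycle c' y := (mem_blockL σ).1 hc'2
    have hc'c : c' < c := hlt c' hc'1
    refine ⟨lt_of_le_of_lt (hc'L y hsc) hc'c, fun hxy => ?_⟩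
    have : c = c' := by
      rw [hc, ldr_eq_of_sameCycle σ hxy, ← ldr_eq_of_sameCycle σ hsc,
        ldr_eq_self_of_isLeader σ hc'L]
    exact absurd (this ▸ hc'c) (lt_irrefl c)
  · intro y hy
    rw [← htl] at hy
    exact (sameCycle_ldr σ x).trans ((mem_blockL σ).1 hy)
  · rw [← htl]
    exact (mem_blockL σ).2 (sameCycle_ldr σ x).symm

lemma covTable_eq_zero_of_isLeader {x : Fin m} (h : isLeader σ x) :
    covTable σ x = 0 := by
  obtain ⟨A, tl, B, hrep, hA, htl, hxtl⟩ := stdRep_decomp σ x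
  have hcx : ldr σ x = x := ldr_eq_self_of_isLeader σ h
  rw [hcx] at hrep hA hxtl
  have h1 : (stdRep σ).takeWhile (fun t => decide (t ≠ x)) = A := by
    rw [hrep, List.append_assoc, takeWhile_append_all (fun a ha => ?_),
      takeWhile_append_stop hxtl (by simp), List.takeWhile_cons, if_neg (by simp),
      List.append_nil]
    have := (hA a ha).1
    simp only [decide_eq_true_iff]
    exact fun hax => absurd (hax ▸ this) (lt_irrefl x)
  have h2 : A.filter (fun t => decide (x < t)) = [] := by
    rw [List.filter_eq_nil_iff]
    intro a ha
    have := (hA a ha).1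
    simp only [decide_eq_true_iff]
    exact fun hxa => absurd (hxa.trans this) (lt_irrefl x)
  have h0 : (((stdRep σ).takeWhile fun t => decide (t ≠ x)).filter
      fun t => decide (x < t)) = [] := by rw [h1, h2]
  unfold covTable
  rw [h0]
  rfl

lemma covTable_spec {x : Fin m} (h : ¬ isLeader σ x) :
    ∃ t : Fin m, σ.SameCycle x t ∧ x < t ∧ covTable σ x = m - t.val := by
  obtain ⟨A, tl, B, hrep, hA, htl, hxtl⟩ := stdRep_decomp σ x
  set c := ldr σ x with hc
  have hcx : c ≠ x := fun he => h (he ▸ ldr_isLeader σ x)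
  have hxc : x < c := lt_of_le_of_ne (le_ldr σ x) (Ne.symm hcx)
  set p : Fin m → Bool := fun t => decide (t ≠ x) with hp
  set q : Fin m → Bool := fun t => decide (x < t) with hq
  have h1 : (stdRep σ).takeWhile p = A ++ (c :: tl).takeWhile p := by
    rw [hrep, List.append_assoc, takeWhile_append_all (fun a ha => ?_),
      takeWhile_append_stop hxtl (by simp [hp])]
    have := (hA a ha).2
    simp only [hp, decide_eq_true_iff]
    exact fun hax => this (hax ▸ Equiv.Perm.SameCycle.refl σ x)
  have h2 : (c :: tl).takeWhile p = c :: tl.takeWhile p := by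
    rw [List.takeWhile_cons, if_pos (by simp [hp, hcx])]
  set tw := tl.takeWhile p with htw
  have h3 : ((stdRep σ).takeWhile p).filter q = A.filter q ++ (c :: tw).filter q := by
    rw [h1, h2, List.filter_append]
  have h4 : (c :: tw).filter q = c :: tw.filter q := by
    rw [List.filter_cons, if_pos (by simp [hq, hxc])]
  have hne : (c :: tw).filter q ≠ [] := by rw [h4]; exact List.cons_ne_nil _ _
  set t := ((c :: tw).filter q).getLast hne with ht
  have hlast : (((stdRep σ).takeWhile p).filter q).getLast? = some t := by
    rw [h3, List.getLast?_append, List.getLast?_eq_getLast hne]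
    rfl
  have htmem : t ∈ (c :: tw).filter q := List.getLast_mem hne
  have htq : x < t := by
    have := (List.mem_filter.1 htmem).2
    simpa [hq] using this
  have htcyc : σ.SameCycle x t := by
    have h5 : t ∈ c :: tw := (List.mem_filter.1 htmem).1
    have h6 : t ∈ c :: tl := by
      rcases List.mem_cons.1 h5 with h | h
      · exact h ▸ List.mem_cons_self (a := c) (l := tl)
      · exact List.mem_cons_of_mem c ((List.takeWhile_prefix p).subset h)
    exact htl t h6
  refine ⟨t, htcyc, htq, ?_⟩
  unfold covTable
  rw [← hp, ← hq, hlast]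

lemma covTable_ne_zero {x : Fin m} (h : ¬ isLeader σ x) : covTable σ x ≠ 0 := by
  obtain ⟨t, -, -, hcov⟩ := covTable_spec σ h
  have := t.isLt
  omega

/-- `alphaOf` evaluated at the position of `x`. -/
lemma alpha_pos_eq (x : Fin m) : alphaOf σ (m - x.val) = covTable σ x := by
  have hx := x.isLt
  rw [alphaOf, dif_pos (by omega)]
  congr 1
  exact Fin.ext (by simp; omega)

lemma alpha_iter_zero (k : ℕ) : (alphaOf σ)^[k] 0 = 0 := by
  induction k with
  | zero => rfl
  | succ k ih => rw [Function.iterate_succ_apply, show alphaOf σ 0 = 0 by simp [alphaOf], ih]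

lemma reach (x : Fin m) :
    ∃ k, (alphaOf σ)^[k] (m - x.val) = m - (ldr σ x).val := by
  suffices H : ∀ n (x : Fin m), m - x.val = n →
      ∃ k, (alphaOf σ)^[k] (m - x.val) = m - (ldr σ x).val from H _ x rfl
  intro n
  induction n using Nat.strong_induction_on with
  | _ n ih =>
    intro x hx
    by_cases hL : isLeader σ x
    · exact ⟨0, by simp [ldr_eq_self_of_isLeader σ hL]⟩
    · obtain ⟨t, hst, hxt, hcov⟩ := covTable_spec σ hL
      have h1 : alphaOf σ (m - x.val) = m - t.val := by rw [alpha_pos_eq]; exact hcov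
      have hlt : m - t.val < n := by
        have := x.isLt; have := t.isLt
        have : x.val < t.val := hxt
        omega
      obtain ⟨k, hk⟩ := ih (m - t.val) (hx ▸ hlt) t rfl
      refine ⟨k + 1, ?_⟩
      rw [Function.iterate_succ_apply, h1, hk, ← ldr_eq_of_sameCycle σ hst]

lemma back : ∀ (k : ℕ) (x : Fin m) (h : ℕ), 1 ≤ h → (alphaOf σ)^[k] (m - x.val) = h →
    ∃ s : Fin m, h = m - s.val ∧ σ.SameCycle x s := by
  intro k
  induction k with
  | zero => exact fun x h h1 he => ⟨x, he.symm, Equiv.Perm.SameCycle.refl σ x⟩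
  | succ k ih =>
    intro x h h1 he
    rw [Function.iterate_succ_apply] at he
    by_cases hL : isLeader σ x
    · rw [alpha_pos_eq, covTable_eq_zero_of_isLeader σ hL, alpha_iter_zero] at he
      omega
    · obtain ⟨t, hst, -, hcov⟩ := covTable_spec σ hL
      rw [alpha_pos_eq, hcov] at he
      obtain ⟨s, hs1, hs2⟩ := ih t h h1 he
      exact ⟨s, hs1, hst.trans hs2⟩

lemma comp_eq (x : Fin m) :
    componentOf m (alphaOf σ) (m - (ldr σ x).val)
      = (cls σ x).image (fun s : Fin m => m - s.val) := by
  ext j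
  simp only [componentOf, Finset.mem_filter, Finset.mem_Icc, Finset.mem_image, mem_cls]
  constructor
  · rintro ⟨⟨hj1, hjm⟩, k, hk⟩
    set s' : Fin m := ⟨m - j, by omega⟩ with hs'
    have hjs : j = m - s'.val := by simp [hs']; omega
    have hld1 : 1 ≤ m - (ldr σ x).val := by have := (ldr σ x).isLt; omega
    obtain ⟨s, hseq, hscyc⟩ := back σ k s' _ hld1 (by rw [← hjs]; exact hk)
    have hsld : s = ldr σ x := by
      apply Fin.ext
      have := s.isLt; have := (ldr σ x).isLt
      omega
    rw [hsld] at hscyc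
    exact ⟨s', (sameCycle_ldr σ x).trans hscyc.symm, hjs.symm⟩
  · rintro ⟨s, hs, rfl⟩
    have hsl := s.isLt
    refine ⟨⟨by omega, by omega⟩, ?_⟩
    obtain ⟨k, hk⟩ := reach σ s
    exact ⟨k, by rw [hk, ← ldr_eq_of_sameCycle σ hs]⟩

end CyclesComp

open CyclesComp in
theorem cycles_correspond_to_components (m : ℕ) (hm : 1 ≤ m) (σ : Equiv.Perm (Fin m)) :
    (∀ (C : Finset (Fin m)) (hC : C.Nonempty), σ.IsCycleOn ↑C →
        C.image (fun s : Fin m => m - s.val)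
          = componentOf m (alphaOf σ) (m - (C.max' hC).val)) ∧
      ((Finset.univ.image fun x : Fin m =>
            Finset.univ.filter fun y : Fin m => σ.SameCycle x y).image
          (fun C => C.image fun s : Fin m => m - s.val)
        = ((Finset.Icc 1 m).filter fun h => alphaOf σ h = 0).image
            (componentOf m (alphaOf σ))) ∧
      ((Finset.Icc 1 m).filter fun j => alphaOf σ j = 0).card = numOrbits σ := by
  have hclsdef : ∀ x : Fin m,
      (Finset.univ.filter fun y : Fin m => σ.SameCycle x y) = cls σ x := fun _ => rfl
  refine ⟨?_, ?_, ?_⟩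
  · -- part 1
    intro C hC hcyc
    obtain ⟨x₀, hx₀⟩ := hC
    have hCcls : C = cls σ x₀ := by
      ext y
      rw [mem_cls]
      constructor
      · intro hy
        exact hcyc.2 (Finset.mem_coe.2 hx₀) (Finset.mem_coe.2 hy)
      · intro hy
        obtain ⟨i, -, rfl⟩ := hy.exists_pow_eq'
        clear hy
        induction i with
        | zero => simpa using hx₀
        | succ i ihh =>
          rw [pow_succ', Equiv.Perm.mul_apply]
          exact Finset.mem_coe.1 (hcyc.1.mapsTo (Finset.mem_coe.2 ihh))
    subst hCcls
    exact (comp_eq σ x₀).symm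
  · -- part 2
    apply Finset.Subset.antisymm
    · intro S hS
      simp only [Finset.mem_image, Finset.mem_univ, true_and] at hS ⊢
      obtain ⟨x, ⟨x', -, rfl⟩, rfl⟩ := hS
      refine ⟨m - (ldr σ x').val, ?_, ?_⟩
      · have := (ldr σ x').isLt
        refine Finset.mem_filter.2 ⟨Finset.mem_Icc.2 ⟨by omega, by omega⟩, ?_⟩
        rw [alpha_pos_eq, covTable_eq_zero_of_isLeader σ (ldr_isLeader σ x')]
      · rw [comp_eq σ x', hclsdef]
    · intro S hS
      simp only [Finset.mem_image] at hS ⊢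
      obtain ⟨h, hh, rfl⟩ := hS
      obtain ⟨hIcc, hαz⟩ := Finset.mem_filter.1 hh
      obtain ⟨h1, h2⟩ := Finset.mem_Icc.1 hIcc
      set s : Fin m := ⟨m - h, by omega⟩ with hsdef
      have hhs : h = m - s.val := by simp [hsdef]; omega
      have hsL : isLeader σ s := by
        by_contra hns
        exact covTable_ne_zero σ hns (by rw [← alpha_pos_eq, ← hhs]; exact hαz)
      refine ⟨cls σ s, ⟨s, Finset.mem_univ s, (hclsdef s)⟩, ?_⟩
      rw [← comp_eq σ s, ldr_eq_self_of_isLeader σ hsL, ← hhs]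
  · -- part 3
    rw [numOrbits]
    refine Finset.card_bij
      (fun j hj => cls σ ⟨m - j, by
        obtain ⟨hIcc, -⟩ := Finset.mem_filter.1 hj
        obtain ⟨h1, h2⟩ := Finset.mem_Icc.1 hIcc
        omega⟩) ?_ ?_ ?_
    · intro j hj
      exact Finset.mem_image.2 ⟨_, Finset.mem_univ _, hclsdef _⟩
    · intro j₁ hj₁ j₂ hj₂ heq
      obtain ⟨hI₁, hz₁⟩ := Finset.mem_filter.1 hj₁
      obtain ⟨hI₂, hz₂⟩ := Finset.mem_filter.1 hj₂
      obtain ⟨ha₁, hb₁⟩ := Finset.mem_Icc.1 hI₁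
      obtain ⟨ha₂, hb₂⟩ := Finset.mem_Icc.1 hI₂
      set s₁ : Fin m := ⟨m - j₁, by omega⟩
      set s₂ : Fin m := ⟨m - j₂, by omega⟩
      have hL₁ : isLeader σ s₁ := by
        by_contra hns
        refine covTable_ne_zero σ hns ?_
        rw [← alpha_pos_eq]
        have : m - s₁.val = j₁ := by simp [s₁]; omega
        rw [this]; exact hz₁
      have hL₂ : isLeader σ s₂ := by
        by_contra hns
        refine covTable_ne_zero σ hns ?_
        rw [← alpha_pos_eq]
        have : m - s₂.val = j₂ := by simp [s₂]; omega
        rw [this]; exact hz₂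
      have heq' : cls σ s₁ = cls σ s₂ := heq
      have hcyc : σ.SameCycle s₁ s₂ := by
        have : s₂ ∈ cls σ s₂ := (mem_cls σ).2 (Equiv.Perm.SameCycle.refl σ s₂)
        rw [← heq'] at this
        exact (mem_cls σ).1 this
      have : s₁ = s₂ := by
        rw [← ldr_eq_self_of_isLeader σ hL₁, ← ldr_eq_self_of_isLeader σ hL₂]
        exact ldr_eq_of_sameCycle σ hcyc
      have hval : m - j₁ = m - j₂ := congrArg Fin.val this
      omega
    · intro b hb
      obtain ⟨x, -, rfl⟩ := Finset.mem_image.1 hb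
      have hlt := (ldr σ x).isLt
      refine ⟨m - (ldr σ x).val, Finset.mem_filter.2 ⟨Finset.mem_Icc.2 ⟨by omega, by omega⟩, ?_⟩, ?_⟩
      · rw [alpha_pos_eq, covTable_eq_zero_of_isLeader σ (ldr_isLeader σ x)]
      · rw [hclsdef]
        have h5 : ∀ (pf : m - (m - (ldr σ x).val) < m),
            cls σ (⟨m - (m - (ldr σ x).val), pf⟩ : Fin m) = cls σ x := by
          intro pf
          have h6 : (⟨m - (m - (ldr σ x).val), pf⟩ : Fin m) = ldr σ x :=
            Fin.ext (by simp; omega)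
          rw [h6, ← cls_eq σ (sameCycle_ldr σ x)]
        exact h5 _
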